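/- Let N ≥ 1, let U be an N×N complex unitary matrix, and let i, j ∈ [N] be indices such that Re(U_{j,i}) ≥ 0. Let v ∈ ℝ^N be a random vector with independent standard Gaussian N(0,1) coordinates. Then Pr( v_i ≥ 0 and Re((Uv)_j) ≥ 0 ) ≥ (1/4) · (1 + Re(U_{j,i}) · (1 − |U_{j,i}|)² / 8). -/

import Mathlib

open MeasureTheory ProbabilityTheory
open scoped BigOperators

open Real
open scoped NNReal ENNReal


lemma gauss_pdf_conv_pointwise {a b : ℝ} (ha : 0 < a) (hb : 0 < b) (z x : ℝ) :
    gaussianPDFReal 0 ⟨a, ha.le⟩ x * gaussianPDFReal 0 ⟨b, hb.le⟩ (z - x) =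
      gaussianPDFReal 0 ⟨a + b, by positivity⟩ z *
        ((√(π / ((a+b)/(2*a*b))))⁻¹ * rexp (-((a+b)/(2*a*b)) * (x - a*z/(a+b))^2)) := by
  have hab : 0 < a + b := by linarith
  simp only [gaussianPDFReal, NNReal.coe_mk, sub_zero]
  have h1 : √(2 * π * a) * √(2 * π * b) = √(2 * π * (a+b)) * √(π / ((a+b)/(2*a*b))) := by
    rw [← Real.sqrt_mul (by positivity), ← Real.sqrt_mul (by positivity)]
    congr 1
    field_simp
  have h2 : rexp (-x^2 / (2*a)) * rexp (-(z-x)^2 / (2*b)) =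
      rexp (-z^2 / (2*(a+b))) * rexp (-((a+b)/(2*a*b)) * (x - a*z/(a+b))^2) := by
    rw [← Real.exp_add, ← Real.exp_add]
    congr 1
    field_simp
    ring
  calc (√(2 * π * a))⁻¹ * rexp (-x ^ 2 / (2 * a)) * ((√(2 * π * b))⁻¹ * rexp (-(z - x) ^ 2 / (2 * b)))
      = (√(2 * π * a) * √(2 * π * b))⁻¹ * (rexp (-x^2 / (2*a)) * rexp (-(z-x)^2 / (2*b))) := by
        rw [mul_inv]; ring
    _ = _ := by
        rw [h1, h2, mul_inv]
        change _ = (√(2 * π * (a+b)))⁻¹ * rexp (-z ^ 2 / (2 * (a+b))) * _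
        ring

lemma integral_exp_neg_mul_sq_sub {k m : ℝ} (hk : 0 < k) :
    ∫ x : ℝ, rexp (-k * (x - m)^2) = √(π / k) := by
  rw [← integral_gaussian k]
  exact integral_sub_right_eq_self (fun x => rexp (-k * x^2)) m

lemma integrable_exp_neg_mul_sq_sub {k m : ℝ} (hk : 0 < k) :
    Integrable (fun x : ℝ => rexp (-k * (x - m)^2)) :=
  (integrable_exp_neg_mul_sq hk).comp_sub_right m

lemma gauss_conv_integral {a b : ℝ} (ha : 0 < a) (hb : 0 < b) (z : ℝ) :
    ∫ x : ℝ, gaussianPDFReal 0 ⟨a, ha.le⟩ x * gaussianPDFReal 0 ⟨b, hb.le⟩ (z - x) =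
      gaussianPDFReal 0 ⟨a + b, by positivity⟩ z := by
  have hk : 0 < (a+b)/(2*a*b) := by positivity
  simp_rw [gauss_pdf_conv_pointwise ha hb z]
  rw [integral_const_mul, integral_const_mul, integral_exp_neg_mul_sq_sub hk,
    inv_mul_cancel₀ (by positivity), mul_one]

lemma integrable_gauss_conv {a b : ℝ} (ha : 0 < a) (hb : 0 < b) (z : ℝ) :
    Integrable (fun x => gaussianPDFReal 0 ⟨a, ha.le⟩ x * gaussianPDFReal 0 ⟨b, hb.le⟩ (z - x)) := by
  have : (fun x => gaussianPDFReal 0 ⟨a, ha.le⟩ x * gaussianPDFReal 0 ⟨b, hb.le⟩ (z - x))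
      = fun x => gaussianPDFReal 0 ⟨a+b, by positivity⟩ z *
        ((√(π / ((a+b)/(2*a*b))))⁻¹ * rexp (-((a+b)/(2*a*b)) * (x - a*z/(a+b))^2)) := by
    ext x; exact gauss_pdf_conv_pointwise ha hb z x
  rw [this]
  exact ((integrable_exp_neg_mul_sq_sub (by positivity)).const_mul _).const_mul _

lemma gauss_conv_lintegral {a b : ℝ} (ha : 0 < a) (hb : 0 < b) (z : ℝ) :
    ∫⁻ x : ℝ, gaussianPDF 0 ⟨a, ha.le⟩ x * gaussianPDF 0 ⟨b, hb.le⟩ (z - x) =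
      gaussianPDF 0 ⟨a + b, by positivity⟩ z := by
  simp_rw [gaussianPDF]
  rw [lintegral_congr (fun x => (ENNReal.ofReal_mul (gaussianPDFReal_nonneg 0 ⟨a, ha.le⟩ x)).symm),
    ← gauss_conv_integral ha hb z,
    ← ofReal_integral_eq_lintegral_ofReal (integrable_gauss_conv ha hb z)
      (Filter.Eventually.of_forall fun x =>
        mul_nonneg (gaussianPDFReal_nonneg _ _ _) (gaussianPDFReal_nonneg _ _ _))]

open scoped NNReal ENNReal

lemma gauss_conv_lintegral' (a b : ℝ≥0) (ha : a ≠ 0) (hb : b ≠ 0) (z : ℝ) :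
    ∫⁻ x : ℝ, gaussianPDF 0 a x * gaussianPDF 0 b (z - x) = gaussianPDF 0 (a + b) z := by
  have ha' : 0 < (a:ℝ) := ha.bot_lt
  have hb' : 0 < (b:ℝ) := hb.bot_lt
  have e1 : (⟨(a:ℝ), ha'.le⟩ : ℝ≥0) = a := rfl
  have e2 : (⟨(b:ℝ), hb'.le⟩ : ℝ≥0) = b := rfl
  have e3 : (⟨(a:ℝ) + (b:ℝ), by positivity⟩ : ℝ≥0) = a + b := rfl
  exact gauss_conv_lintegral ha' hb' z

lemma gaussian_conv (a b : ℝ≥0) :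
    Measure.map (fun p : ℝ × ℝ => p.1 + p.2)
      ((gaussianReal 0 a).prod (gaussianReal 0 b)) = gaussianReal 0 (a + b) := by
  by_cases ha : a = 0
  · subst ha
    rw [gaussianReal_zero_var, Measure.dirac_prod, zero_add,
      Measure.map_map measurable_add (measurable_prodMk_left)]
    rw [show ((fun p : ℝ × ℝ => p.1 + p.2) ∘ Prod.mk (0:ℝ)) = id by ext y; simp, Measure.map_id]
  by_cases hb : b = 0
  · subst hb
    rw [gaussianReal_zero_var, Measure.prod_dirac, add_zero,
      Measure.map_map measurable_add (measurable_prodMk_right)]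
    rw [show ((fun p : ℝ × ℝ => p.1 + p.2) ∘ (fun x : ℝ => (x, (0:ℝ)))) = id by ext y; simp,
      Measure.map_id]
  have hab : a + b ≠ 0 := by positivity
  ext s hs
  rw [Measure.map_apply measurable_add hs,
    Measure.prod_apply (hs.preimage measurable_add),
    gaussianReal_of_var_ne_zero 0 hab, withDensity_apply _ hs, ← lintegral_indicator hs _]
  have key : ∀ x : ℝ, (gaussianReal 0 b) (Prod.mk x ⁻¹' ((fun p : ℝ × ℝ => p.1 + p.2) ⁻¹' s)) =
      ∫⁻ z, s.indicator (fun _ => 1) z * gaussianPDF 0 b (z - x) := by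
    intro x
    have hsx : MeasurableSet {y : ℝ | x + y ∈ s} := measurable_const_add x hs
    have hset : Prod.mk x ⁻¹' ((fun p : ℝ × ℝ => p.1 + p.2) ⁻¹' s) = {y : ℝ | x + y ∈ s} := rfl
    rw [hset, gaussianReal_of_var_ne_zero 0 hb, withDensity_apply _ hsx,
      ← lintegral_indicator hsx _]
    calc ∫⁻ y, {y : ℝ | x + y ∈ s}.indicator (gaussianPDF 0 b) y
        = ∫⁻ z, {y : ℝ | x + y ∈ s}.indicator (gaussianPDF 0 b) (z - x) := by
          exact (lintegral_sub_right_eq_self _ x).symm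
      _ = ∫⁻ z, s.indicator (fun _ => 1) z * gaussianPDF 0 b (z - x) := by
          congr 1 with z
          by_cases hz : z ∈ s
          · rw [Set.indicator_of_mem (by simp [hz]), Set.indicator_of_mem hz, one_mul]
          · rw [Set.indicator_of_notMem (by simp [hz]), Set.indicator_of_notMem hz, zero_mul]
  simp_rw [key]
  rw [gaussianReal_of_var_ne_zero 0 ha, lintegral_withDensity_eq_lintegral_mul _
    (measurable_gaussianPDF 0 a) (by
      apply Measurable.lintegral_prod_right
      exact ((measurable_const.indicator hs).comp measurable_snd).mul
        ((measurable_gaussianPDF 0 b).comp (measurable_snd.sub measurable_fst)))]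
  simp only [Pi.mul_apply]
  have pull : ∀ x : ℝ, gaussianPDF 0 a x * ∫⁻ z, s.indicator (fun _ => 1) z * gaussianPDF 0 b (z - x)
      = ∫⁻ z, gaussianPDF 0 a x * (s.indicator (fun _ => 1) z * gaussianPDF 0 b (z - x)) := by
    intro x
    refine (lintegral_const_mul _ ?_).symm
    exact (measurable_const.indicator hs).mul
      ((measurable_gaussianPDF 0 b).comp (measurable_id.sub measurable_const))
  rw [lintegral_congr pull]
  rw [lintegral_lintegral_swap (by
      apply Measurable.aemeasurable
      exact ((measurable_gaussianPDF 0 a).comp measurable_fst).mul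
        (((measurable_const.indicator hs).comp measurable_snd).mul
          ((measurable_gaussianPDF 0 b).comp (measurable_snd.sub measurable_fst))))]
  congr 1 with z
  calc ∫⁻ x, gaussianPDF 0 a x * (s.indicator (fun _ => 1) z * gaussianPDF 0 b (z - x))
      = s.indicator (fun _ => 1) z * ∫⁻ x, gaussianPDF 0 a x * gaussianPDF 0 b (z - x) := by
        rw [← lintegral_const_mul _ (by
          exact (measurable_gaussianPDF 0 a).mul
            ((measurable_gaussianPDF 0 b).comp (measurable_const.sub measurable_id)))]
        congr 1 with x; ring
    _ = s.indicator (gaussianPDF 0 (a+b)) z := by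
        rw [gauss_conv_lintegral' a b ha hb z]
        by_cases hz : z ∈ s
        · rw [Set.indicator_of_mem hz, Set.indicator_of_mem hz, one_mul]
        · rw [Set.indicator_of_notMem hz, Set.indicator_of_notMem hz, zero_mul]

noncomputable def nnsq (w : ℝ) : ℝ≥0 := ⟨w^2, sq_nonneg w⟩

lemma gaussian_linear_comb : ∀ (n : ℕ) (w : Fin n → ℝ),
    Measure.map (fun v : Fin n → ℝ => ∑ x, w x * v x)
      (Measure.pi fun _ : Fin n => gaussianReal 0 1) = gaussianReal 0 (∑ x, nnsq (w x)) := by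
  intro n
  induction n with
  | zero =>
    intro w
    simp only [Finset.univ_eq_empty, Finset.sum_empty]
    rw [show (fun v : Fin 0 → ℝ => (0:ℝ)) = fun _ => 0 from rfl, Measure.map_const,
      measure_univ, one_smul, gaussianReal_zero_var]
  | succ n ih =>
    intro w
    have hmp := measurePreserving_piFinSuccAbove (fun _ : Fin (n+1) => gaussianReal 0 1) 0
    set e := MeasurableEquiv.piFinSuccAbove (fun _ : Fin (n+1) => ℝ) 0
    have hcomp : (fun v : Fin (n+1) → ℝ => ∑ x, w x * v x)
        = (fun p : ℝ × (Fin n → ℝ) => w 0 * p.1 + ∑ x, w x.succ * p.2 x) ∘ e := by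
      ext v
      simp only [Function.comp_apply, e, MeasurableEquiv.piFinSuccAbove_apply]
      rw [Fin.sum_univ_succ]
      simp [Fin.zero_succAbove, Fin.tail]
    have hmeas2 : Measurable (fun p : ℝ × (Fin n → ℝ) => w 0 * p.1 + ∑ x, w x.succ * p.2 x) := by
      apply Measurable.add
      · exact measurable_fst.const_mul _
      · exact Finset.measurable_sum _ fun x _ => (measurable_snd.eval).const_mul _
    rw [hcomp, ← Measure.map_map hmeas2 e.measurable, hmp.map_eq]
    have hsplit : (fun p : ℝ × (Fin n → ℝ) => w 0 * p.1 + ∑ x, w x.succ * p.2 x)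
        = (fun q : ℝ × ℝ => q.1 + q.2) ∘
          (Prod.map (fun t : ℝ => w 0 * t) (fun u : Fin n → ℝ => ∑ x, w x.succ * u x)) := rfl
    rw [hsplit, ← Measure.map_map measurable_add
      ((measurable_id'.const_mul _).prodMap (Finset.measurable_sum _ fun x _ =>
        (measurable_pi_apply x).const_mul _)),
      ← Measure.map_prod_map _ _ (measurable_id'.const_mul _)
        (Finset.measurable_sum _ fun x _ => (measurable_pi_apply x).const_mul _),
      ih (fun x => w x.succ)]
    have hscale : Measure.map (fun t : ℝ => w 0 * t) (gaussianReal 0 1)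
        = gaussianReal 0 (nnsq (w 0)) := by
      rw [show (fun t : ℝ => w 0 * t) = (w 0 * ·) from rfl, gaussianReal_map_const_mul]
      congr 1
      · ring
      · simp [nnsq]
        rfl
    rw [hscale, gaussian_conv, Fin.sum_univ_succ]

lemma gauss_singleton (t : ℝ≥0) (ht : t ≠ 0) (c : ℝ) : gaussianReal 0 t {c} = 0 := by
  rw [gaussianReal_of_var_ne_zero 0 ht, withDensity_apply _ (measurableSet_singleton c)]
  rw [Measure.restrict_singleton, Real.volume_singleton, zero_smul, lintegral_zero_measure]

lemma gauss_Ici_half (t : ℝ≥0) (ht : t ≠ 0) : gaussianReal 0 t (Set.Ici 0) = 1/2 := by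
  have hsym : gaussianReal 0 t (Set.Ici 0) = gaussianReal 0 t (Set.Iic 0) := by
    have hmap : (gaussianReal 0 t).map ((-1 : ℝ) * ·) = gaussianReal 0 t := by
      rw [gaussianReal_map_const_mul]
      norm_num
    conv_lhs => rw [← hmap]
    rw [Measure.map_apply (measurable_const_mul _) measurableSet_Ici]
    congr 1
    ext x
    simp only [Set.mem_preimage, Set.mem_Ici, Set.mem_Iic]
    constructor <;> intro h <;> nlinarith
  have hsplit : (Set.Iio (0:ℝ)) ∪ (Set.Ici 0) = Set.univ := Set.Iio_union_Ici
  have hdisj : Disjoint (Set.Iio (0:ℝ)) (Set.Ici 0) := Set.Iio_disjoint_Ici le_rfl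
  have h1 : gaussianReal 0 t (Set.Iio 0) + gaussianReal 0 t (Set.Ici 0) = 1 := by
    rw [← measure_union hdisj measurableSet_Ici, hsplit, measure_univ]
  have h2 : gaussianReal 0 t (Set.Iic 0) = gaussianReal 0 t (Set.Iio 0) := by
    rw [← Set.Iio_union_right, measure_union (by simp) (measurableSet_singleton 0),
      gauss_singleton t ht, add_zero]
  have h4 : gaussianReal 0 t (Set.Ici 0) = gaussianReal 0 t (Set.Iio 0) := hsym.trans h2
  rw [ENNReal.eq_div_iff two_ne_zero ENNReal.ofNat_ne_top, two_mul]
  nth_rewrite 1 [h4]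
  exact h1

lemma gauss_pdf_anti (t : ℝ≥0) {x y : ℝ} (h : x^2 ≤ y^2) :
    gaussianPDFReal 0 t y ≤ gaussianPDFReal 0 t x := by
  simp only [gaussianPDFReal, sub_zero]
  apply mul_le_mul_of_nonneg_left _ (by positivity)
  apply Real.exp_le_exp.mpr
  by_cases ht : (t:ℝ) = 0
  · simp [ht]
  · have ht' : 0 < (t:ℝ) := lt_of_le_of_ne t.2 (Ne.symm ht)
    rw [div_le_div_iff₀ (by positivity) (by positivity)]
    nlinarith

lemma gauss_Icc_lb (t : ℝ≥0) (ht : t ≠ 0) {c d : ℝ} (hcd : c ≤ d) (K : ℝ) (hK0 : 0 ≤ K)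
    (hK : ∀ x ∈ Set.Icc c d, K ≤ gaussianPDFReal 0 t x) :
    ENNReal.ofReal (K * (d - c)) ≤ gaussianReal 0 t (Set.Icc c d) := by
  rw [gaussianReal_of_var_ne_zero 0 ht, withDensity_apply _ measurableSet_Icc]
  calc ENNReal.ofReal (K * (d - c)) = ENNReal.ofReal K * volume (Set.Icc c d) := by
        rw [Real.volume_Icc, ENNReal.ofReal_mul hK0]
    _ = ∫⁻ _ in Set.Icc c d, ENNReal.ofReal K ∂volume := (setLIntegral_const _ _).symm
    _ ≤ ∫⁻ x in Set.Icc c d, gaussianPDF 0 t x ∂volume := by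
        apply setLIntegral_mono (measurable_gaussianPDF 0 t)
        intro x hx
        exact ENNReal.ofReal_le_ofReal (hK x hx)

lemma gauss_Ico_lb (t : ℝ≥0) (ht : t ≠ 0) {c : ℝ} (hc : 0 ≤ c) :
    ENNReal.ofReal (gaussianPDFReal 0 t c * c) ≤ gaussianReal 0 t (Set.Ico (-c) 0) := by
  have h1 : ENNReal.ofReal (gaussianPDFReal 0 t c * c) ≤ gaussianReal 0 t (Set.Icc (-c) 0) := by
    have := gauss_Icc_lb t ht (show -c ≤ 0 by linarith) (gaussianPDFReal 0 t c)
      (gaussianPDFReal_nonneg _ _ _) (fun x hx => gauss_pdf_anti t (by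
        obtain ⟨hx1, hx2⟩ := hx; nlinarith))
    simpa using this
  refine h1.trans ?_
  have : Set.Icc (-c) 0 ⊆ Set.Ico (-c) 0 ∪ {0} := by
    intro x hx
    rcases eq_or_lt_of_le hx.2 with h | h
    · right; simp [h]
    · left; exact ⟨hx.1, h⟩
  calc gaussianReal 0 t (Set.Icc (-c) 0) ≤ gaussianReal 0 t (Set.Ico (-c) 0 ∪ {0}) :=
        measure_mono this
    _ ≤ gaussianReal 0 t (Set.Ico (-c) 0) + gaussianReal 0 t {0} := measure_union_le _ _
    _ = gaussianReal 0 t (Set.Ico (-c) 0) := by rw [gauss_singleton t ht, add_zero]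

lemma core_split (w : ℝ) (hw0 : 0 ≤ w) (t : ℝ≥0) (ht : t ≠ 0)
    (A : Set ℝ) (hA : MeasurableSet A) (hA0 : A ⊆ Set.Ici 0) :
    (1/4 : ℝ≥0∞) + ∫⁻ x in A, gaussianReal 0 t (Set.Ico (-(w*x)) 0) ∂(gaussianReal 0 1) ≤
      ((gaussianReal 0 1).prod (gaussianReal 0 t)) {p : ℝ × ℝ | 0 ≤ p.1 ∧ 0 ≤ w * p.1 + p.2} := by
  set γ1 := gaussianReal 0 1
  set γt := gaussianReal 0 t
  set E₁ : Set (ℝ × ℝ) := (Set.Ici 0) ×ˢ (Set.Ici 0)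
  set E₂ : Set (ℝ × ℝ) := {p | p.1 ∈ A ∧ -(w*p.1) ≤ p.2 ∧ p.2 < 0}
  have hE₂m : MeasurableSet E₂ := by
    apply MeasurableSet.inter (hA.preimage measurable_fst)
    exact (measurableSet_le ((measurable_fst.const_mul w).neg) measurable_snd).inter
      (measurableSet_lt measurable_snd measurable_const)
  have hsub : E₁ ∪ E₂ ⊆ {p : ℝ × ℝ | 0 ≤ p.1 ∧ 0 ≤ w * p.1 + p.2} := by
    rintro ⟨x, y⟩ (⟨hx, hy⟩ | ⟨hx, hy1, _⟩)
    · exact ⟨hx, by simp only [Set.mem_Ici] at hx hy; nlinarith⟩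
    · exact ⟨hA0 hx, by simp only [Set.mem_setOf_eq] at *; linarith⟩
  have hdisj : Disjoint E₁ E₂ := by
    rw [Set.disjoint_left]
    rintro ⟨x, y⟩ ⟨_, hy⟩ ⟨_, _, hy2⟩
    simp only [Set.mem_Ici] at hy
    exact absurd hy (not_le.mpr hy2)
  have h1 : (γ1.prod γt) E₁ = 1/4 := by
    rw [Measure.prod_prod, gauss_Ici_half 1 one_ne_zero, gauss_Ici_half t ht]
    rw [show (1/2 : ℝ≥0∞) * (1/2) = 1/4 by
      rw [one_div, one_div, ← ENNReal.mul_inv (Or.inl two_ne_zero)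
        (Or.inr two_ne_zero)]
      norm_num]
  have h2 : (γ1.prod γt) E₂ = ∫⁻ x in A, γt (Set.Ico (-(w*x)) 0) ∂γ1 := by
    rw [Measure.prod_apply hE₂m]
    rw [← lintegral_indicator hA]
    congr 1 with x
    by_cases hx : x ∈ A
    · rw [Set.indicator_of_mem hx]
      congr 1
      ext y
      simp only [Set.mem_preimage, Set.mem_setOf_eq, Set.mem_Ico, E₂, hx, true_and]
    · rw [Set.indicator_of_notMem hx]
      have : Prod.mk x ⁻¹' E₂ = ∅ := by
        ext y; simp [E₂, hx]
      rw [this, measure_empty]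
  calc (1/4 : ℝ≥0∞) + ∫⁻ x in A, γt (Set.Ico (-(w*x)) 0) ∂γ1
      = (γ1.prod γt) E₁ + (γ1.prod γt) E₂ := by rw [h1, h2]
    _ = (γ1.prod γt) (E₁ ∪ E₂) := (measure_union hdisj hE₂m).symm
    _ ≤ _ := measure_mono hsub

lemma exp_half_lb : (0.6 : ℝ) ≤ rexp (-(1/2)) := by
  have h : rexp (-(1/2)) ^ 2 = (rexp 1)⁻¹ := by
    rw [← Real.exp_nat_mul]
    push_cast
    rw [← Real.exp_neg]
    norm_num
  have he : rexp 1 < 2.7182818286 := Real.exp_one_lt_d9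
  have hp : 0 < rexp (-(1/2)) := Real.exp_pos _
  have h36 : (0.36:ℝ) ≤ rexp (-(1/2)) ^ 2 := by
    rw [h, le_inv_comm₀ (by norm_num) (Real.exp_pos 1)]
    linarith
  nlinarith [h36, hp]

lemma exp_half_ub : rexp (-(1/2)) ≤ (0.61 : ℝ) := by
  have h : rexp (-(1/2)) ^ 2 = (rexp 1)⁻¹ := by
    rw [← Real.exp_nat_mul]
    push_cast
    rw [← Real.exp_neg]
    norm_num
  have he : (2.7182818283 : ℝ) < rexp 1 := Real.exp_one_gt_d9
  have hp : 0 < rexp (-(1/2)) := Real.exp_pos _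
  have h37 : rexp (-(1/2)) ^ 2 ≤ (0.3721:ℝ) := by
    rw [h, inv_le_comm₀ (Real.exp_pos 1) (by norm_num)]
    linarith
  nlinarith [h37, hp]

lemma exp_neg52_lb : (1/21 : ℝ) ≤ rexp (-(5/2)) := by
  have h1 : rexp (-(5/2)) = (rexp (5/2))⁻¹ := by rw [← Real.exp_neg]
  have h2 : rexp (5/2) ≤ rexp 3 := Real.exp_le_exp.mpr (by norm_num)
  have h3 : rexp 3 = rexp 1 ^ 3 := by
    rw [← Real.exp_nat_mul]; norm_num
  have he : rexp 1 < 2.7182818286 := Real.exp_one_lt_d9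
  have hp : 0 < rexp (5/2) := Real.exp_pos _
  rw [h1, le_inv_comm₀ (by norm_num) hp]
  calc rexp (5/2) ≤ rexp 3 := h2
    _ = rexp 1 ^ 3 := h3
    _ ≤ (2.72:ℝ)^3 := by
        apply pow_le_pow_left₀ (Real.exp_pos 1).le
        linarith [Real.exp_one_lt_d9]
    _ ≤ 21 := by norm_num
    _ ≤ (1/21:ℝ)⁻¹ := by norm_num

lemma integral_x_pdf_one :
    ∫ x in Set.Icc (0:ℝ) 1, x * gaussianPDFReal 0 1 x =
      (√(2*π))⁻¹ * (1 - rexp (-(1/2))) := by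
  have hpdf : ∀ x : ℝ, gaussianPDFReal 0 1 x = (√(2*π))⁻¹ * rexp (-x^2/2) := by
    intro x
    simp [gaussianPDFReal, sub_zero]
  have hderiv : ∀ x : ℝ, HasDerivAt (fun y : ℝ => -(√(2*π))⁻¹ * rexp (-y^2/2))
      (x * gaussianPDFReal 0 1 x) x := by
    intro x
    have h1 : HasDerivAt (fun y : ℝ => -y^2/2) (-x) x := by
      have := ((hasDerivAt_pow 2 x).neg).div_const 2
      refine this.congr_deriv ?_
      norm_num
      ring
    have h2 : HasDerivAt (fun y : ℝ => rexp (-y^2/2)) (rexp (-x^2/2) * (-x)) x :=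
      (Real.hasDerivAt_exp _).comp x h1
    have h3 := h2.const_mul (-(√(2*π))⁻¹)
    refine h3.congr_deriv ?_
    rw [hpdf x]
    ring
  rw [MeasureTheory.integral_Icc_eq_integral_Ioc,
    ← intervalIntegral.integral_of_le (zero_le_one)]
  rw [intervalIntegral.integral_eq_sub_of_hasDerivAt (fun x _ => hderiv x) (by
    apply Continuous.intervalIntegrable
    have : Continuous (gaussianPDFReal 0 1) := by
      simp_rw [gaussianPDFReal_def]
      exact continuous_const.mul (Real.continuous_exp.comp (by fun_prop))
    exact continuous_id.mul this)]
  norm_num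
  ring

lemma gauss_pdf_continuous (t : ℝ≥0) : Continuous (gaussianPDFReal 0 t) := by
  simp_rw [gaussianPDFReal_def]
  exact continuous_const.mul (Real.continuous_exp.comp (by fun_prop))

lemma ofReal_quarter : ENNReal.ofReal (1/4 : ℝ) = 1/4 := by
  rw [ENNReal.ofReal_div_of_pos (by norm_num)]
  norm_num

lemma lint_linear {c : ℝ} (hc : 0 ≤ c) :
    ENNReal.ofReal (c * ((√(2*π))⁻¹ * (1 - rexp (-(1/2))))) =
      ∫⁻ x in Set.Icc (0:ℝ) 1, ENNReal.ofReal (c * x) ∂(gaussianReal 0 1) := by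
  rw [gaussianReal_of_var_ne_zero 0 one_ne_zero, gaussianPDF_def,
    restrict_withDensity measurableSet_Icc,
    lintegral_withDensity_eq_lintegral_mul _
      (measurable_gaussianPDFReal 0 1).ennreal_ofReal
      (show Measurable fun x : ℝ => ENNReal.ofReal (c * x) from (measurable_const.mul measurable_id').ennreal_ofReal)]
  simp only [Pi.mul_apply]
  have heq : ∀ x : ℝ, ENNReal.ofReal (gaussianPDFReal 0 1 x) * ENNReal.ofReal (c * x)
      = ENNReal.ofReal (gaussianPDFReal 0 1 x * (c * x)) :=
    fun x => (ENNReal.ofReal_mul (gaussianPDFReal_nonneg 0 1 x)).symm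
  rw [lintegral_congr heq, ← ofReal_integral_eq_lintegral_ofReal]
  · congr 1
    rw [show (fun x => gaussianPDFReal 0 1 x * (c * x)) = (fun x => c * (x * gaussianPDFReal 0 1 x))
        from funext fun x => by ring]
    rw [integral_const_mul, integral_x_pdf_one]
  · exact (((gauss_pdf_continuous 1).mul (continuous_const.mul continuous_id)).integrableOn_Icc)
  · exact (ae_restrict_iff' measurableSet_Icc).mpr (Filter.Eventually.of_forall fun x hx =>
      mul_nonneg (gaussianPDFReal_nonneg 0 1 x) (mul_nonneg hc hx.1))

lemma numeric_small (w σ : ℝ) (hw0 : 0 ≤ w) (hw1 : w ≤ 1) (hσpos : 0 < σ) (hσ1 : σ ≤ 1) :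
    w * (1-w)^2/32 ≤ w * (σ⁻¹ * ((2*π)⁻¹ * (rexp (-(1/2)) * (1 - rexp (-(1/2)))))) := by
  have hs1 : (0.6:ℝ) ≤ rexp (-(1/2)) := exp_half_lb
  have hs2 : rexp (-(1/2)) ≤ (0.61:ℝ) := exp_half_ub
  have hπ : π < 3.15 := Real.pi_lt_d2
  have hπ3 : (3:ℝ) < π := Real.pi_gt_three
  have hσinv : 1 ≤ σ⁻¹ := by
    rw [le_inv_comm₀ (by norm_num) hσpos]
    simpa using hσ1
  have hE : (0.2379:ℝ) ≤ rexp (-(1/2)) * (1 - rexp (-(1/2))) := by nlinarith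
  have h2πb : (6.3:ℝ)⁻¹ ≤ (2*π)⁻¹ := by
    apply inv_anti₀ (by positivity)
    linarith
  have h1 : (1:ℝ)/32 ≤ (2*π)⁻¹ * (rexp (-(1/2)) * (1 - rexp (-(1/2)))) := by
    have hm : (6.3:ℝ)⁻¹ * 0.2379 ≤ (2*π)⁻¹ * (rexp (-(1/2)) * (1 - rexp (-(1/2)))) :=
      mul_le_mul h2πb hE (by norm_num) (by positivity)
    calc (1:ℝ)/32 ≤ (6.3:ℝ)⁻¹ * 0.2379 := by norm_num
      _ ≤ _ := hm
  have h2 : (1:ℝ)/32 ≤ σ⁻¹ * ((2*π)⁻¹ * (rexp (-(1/2)) * (1 - rexp (-(1/2))))) := by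
    calc (1:ℝ)/32 ≤ (2*π)⁻¹ * (rexp (-(1/2)) * (1 - rexp (-(1/2)))) := h1
      _ ≤ σ⁻¹ * ((2*π)⁻¹ * (rexp (-(1/2)) * (1 - rexp (-(1/2))))) :=
          le_mul_of_one_le_left (by positivity) hσinv
  calc w * (1-w)^2/32 ≤ w * (1/32) := by nlinarith [mul_le_mul_of_nonneg_left (show (1-w)^2 ≤ 1 by nlinarith) hw0]
    _ ≤ w * (σ⁻¹ * ((2*π)⁻¹ * (rexp (-(1/2)) * (1 - rexp (-(1/2)))))) :=
        mul_le_mul_of_nonneg_left h2 hw0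

lemma numeric_large (w : ℝ) (hw0 : 0 ≤ w) (hw1 : w ≤ 1) :
    w * (1-w)^2/32 ≤ (2*π)⁻¹ * rexp (-(5/2)) := by
  have hexp : (1/21:ℝ) ≤ rexp (-(5/2)) := exp_neg52_lb
  have hπ : π < 3.15 := Real.pi_lt_d2
  have hπ3 : (3:ℝ) < π := Real.pi_gt_three
  have h2πb : (6.3:ℝ)⁻¹ ≤ (2*π)⁻¹ := by
    apply inv_anti₀ (by positivity)
    linarith
  have hcube : w * (1-w)^2 ≤ 4/27 := by
    nlinarith [mul_nonneg (sq_nonneg (3*w-1)) (show (0:ℝ) ≤ 4-3*w by linarith)]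
  have hm : (6.3:ℝ)⁻¹ * (1/21) ≤ (2*π)⁻¹ * rexp (-(5/2)) :=
    mul_le_mul h2πb hexp (by norm_num) (by positivity)
  calc w * (1-w)^2/32 ≤ (4/27)/32 := by linarith
    _ ≤ (6.3:ℝ)⁻¹ * (1/21) := by norm_num
    _ ≤ (2*π)⁻¹ * rexp (-(5/2)) := hm

lemma core2d (w : ℝ) (hw0 : 0 ≤ w) (hw1 : w ≤ 1) (t : ℝ≥0) (ht1 : (t:ℝ) ≤ 1 - w^2) :
    ENNReal.ofReal (1/4 + w * (1-w)^2 / 32) ≤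
      ((gaussianReal 0 1).prod (gaussianReal 0 t)) {p : ℝ × ℝ | 0 ≤ p.1 ∧ 0 ≤ w * p.1 + p.2} := by
  have hEm : MeasurableSet {p : ℝ × ℝ | 0 ≤ p.1 ∧ 0 ≤ w * p.1 + p.2} :=
    (measurableSet_le measurable_const measurable_fst).inter
      (measurableSet_le measurable_const ((measurable_fst.const_mul w).add measurable_snd))
  by_cases ht : t = 0
  · subst ht
    rw [gaussianReal_zero_var, Measure.prod_dirac,
      Measure.map_apply (show Measurable fun x : ℝ => (x, (0:ℝ)) from
        measurable_id.prodMk measurable_const) hEm]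
    have hpre : (fun x : ℝ => (x, (0:ℝ))) ⁻¹' {p : ℝ × ℝ | 0 ≤ p.1 ∧ 0 ≤ w * p.1 + p.2}
        = Set.Ici 0 := by
      ext x
      simp only [Set.mem_preimage, Set.mem_setOf_eq, Set.mem_Ici, add_zero]
      exact ⟨fun h => h.1, fun h => ⟨h, mul_nonneg hw0 h⟩⟩
    rw [hpre, gauss_Ici_half 1 one_ne_zero]
    calc ENNReal.ofReal (1/4 + w * (1-w)^2 / 32) ≤ ENNReal.ofReal (1/2 : ℝ) := by
          apply ENNReal.ofReal_le_ofReal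
          nlinarith [mul_nonneg hw0 (sq_nonneg (1-w)), sq_nonneg (1-w),
            mul_le_one₀ hw1 (sq_nonneg (1-w)) (show (1-w)^2 ≤ 1 by nlinarith)]
      _ = 1/2 := by rw [ENNReal.ofReal_div_of_pos (by norm_num)]; norm_num
  -- t ≠ 0
  have htpos : 0 < (t:ℝ) := lt_of_le_of_ne t.2 (by exact_mod_cast (Ne.symm ht))
  set σ : ℝ := √(t:ℝ) with hσdef
  have hσpos : 0 < σ := Real.sqrt_pos.mpr htpos
  have hσsq : σ^2 = (t:ℝ) := Real.sq_sqrt t.2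
  have hσ1 : σ ≤ 1 := by nlinarith
  have h2π : (√(2*π))⁻¹ * (√(2*π))⁻¹ = (2*π)⁻¹ := by
    rw [← mul_inv, Real.mul_self_sqrt (by positivity)]
  have hs1 : (0.6:ℝ) ≤ rexp (-(1/2)) := exp_half_lb
  have hs2 : rexp (-(1/2)) ≤ (0.61:ℝ) := exp_half_ub
  have hπ : π < 3.15 := Real.pi_lt_d2
  have hπ3 : (3:ℝ) < π := Real.pi_gt_three
  have hKt : gaussianPDFReal 0 t σ = (√(2*π))⁻¹ * σ⁻¹ * rexp (-(1/2)) := by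
    simp only [gaussianPDFReal, sub_zero]
    rw [show (2*π*(t:ℝ)) = (2*π)*(t:ℝ) from by ring, Real.sqrt_mul (by positivity),
      mul_inv, ← hσdef]
    have he : -σ^2/(2*(t:ℝ)) = -(1/2) := by rw [hσsq]; field_simp
    rw [he]
  by_cases hwσ : w ≤ σ
  · -- small w case: A = Icc 0 1
    refine le_trans ?_ (core_split w hw0 t ht (Set.Icc 0 1) measurableSet_Icc
      (fun x hx => hx.1))
    set c : ℝ := w * ((√(2*π))⁻¹ * σ⁻¹ * rexp (-(1/2))) with hcdef
    have hc0 : 0 ≤ c := by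
      apply mul_nonneg hw0
      positivity
    have hpt : ∀ x ∈ Set.Icc (0:ℝ) 1, ENNReal.ofReal (c * x) ≤
        gaussianReal 0 t (Set.Ico (-(w*x)) 0) := by
      intro x hx
      have hwx : 0 ≤ w * x := mul_nonneg hw0 hx.1
      refine le_trans ?_ (gauss_Ico_lb t ht hwx)
      apply ENNReal.ofReal_le_ofReal
      have hwxσ : w * x ≤ σ := le_trans (mul_le_of_le_one_right hw0 hx.2) hwσ
      have hanti : gaussianPDFReal 0 t σ ≤ gaussianPDFReal 0 t (w*x) :=
        gauss_pdf_anti t (by nlinarith [hwxσ, hwx])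
      calc c * x = gaussianPDFReal 0 t σ * (w * x) := by rw [hKt, hcdef]; ring
        _ ≤ gaussianPDFReal 0 t (w*x) * (w*x) := mul_le_mul_of_nonneg_right hanti hwx
    have hlow : ENNReal.ofReal (c * ((√(2*π))⁻¹ * (1 - rexp (-(1/2))))) ≤
        ∫⁻ x in Set.Icc (0:ℝ) 1, gaussianReal 0 t (Set.Ico (-(w*x)) 0) ∂(gaussianReal 0 1) := by
      rw [lint_linear hc0]
      exact setLIntegral_mono' measurableSet_Icc hpt
    refine le_trans ?_ (add_le_add_right hlow (1/4 : ℝ≥0∞))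
    rw [ENNReal.ofReal_add (by norm_num) (by positivity), ofReal_quarter]
    apply add_le_add_right
    apply ENNReal.ofReal_le_ofReal
    -- real inequality
    have key : c * ((√(2*π))⁻¹ * (1 - rexp (-(1/2))))
        = w * (σ⁻¹ * ((2*π)⁻¹ * (rexp (-(1/2)) * (1 - rexp (-(1/2)))))) := by
      rw [hcdef]
      linear_combination (w * σ⁻¹ * rexp (-(1/2)) * (1 - rexp (-(1/2)))) * h2π
    rw [key]
    exact numeric_small w σ hw0 hw1 hσpos hσ1
  · -- large w case: A = Icc 1 2
    push_neg at hwσ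
    refine le_trans ?_ (core_split w hw0 t ht (Set.Icc 1 2) measurableSet_Icc
      (fun x hx => le_trans zero_le_one hx.1))
    have hpt : ∀ x ∈ Set.Icc (1:ℝ) 2, ENNReal.ofReal ((√(2*π))⁻¹ * rexp (-(1/2))) ≤
        gaussianReal 0 t (Set.Ico (-(w*x)) 0) := by
      intro x hx
      have hmono : Set.Ico (-σ) 0 ⊆ Set.Ico (-(w*x)) 0 := by
        apply Set.Ico_subset_Ico_left
        have : σ ≤ w * x := by nlinarith [hx.1]
        linarith
      refine le_trans ?_ (le_trans (gauss_Ico_lb t ht hσpos.le) (measure_mono hmono))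
      apply ENNReal.ofReal_le_ofReal
      rw [hKt]
      have : (√(2*π))⁻¹ * σ⁻¹ * rexp (-(1/2)) * σ = (√(2*π))⁻¹ * rexp (-(1/2)) * (σ⁻¹ * σ) := by
        ring
      rw [this, inv_mul_cancel₀ hσpos.ne', mul_one]
    have hlow : ENNReal.ofReal ((√(2*π))⁻¹ * rexp (-(1/2))) *
          gaussianReal 0 1 (Set.Icc 1 2) ≤
        ∫⁻ x in Set.Icc (1:ℝ) 2, gaussianReal 0 t (Set.Ico (-(w*x)) 0) ∂(gaussianReal 0 1) := by
      rw [← setLIntegral_const]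
      exact setLIntegral_mono' measurableSet_Icc hpt
    have hIcc : ENNReal.ofReal (gaussianPDFReal 0 1 2) ≤ gaussianReal 0 1 (Set.Icc 1 2) := by
      have := gauss_Icc_lb 1 one_ne_zero (show (1:ℝ) ≤ 2 by norm_num) (gaussianPDFReal 0 1 2)
        (gaussianPDFReal_nonneg _ _ _) (fun x hx => gauss_pdf_anti 1 (by nlinarith [hx.1, hx.2]))
      rw [show (2:ℝ)-1 = 1 by norm_num, mul_one] at this
      exact this
    have hlow2 : ENNReal.ofReal ((√(2*π))⁻¹ * rexp (-(1/2)) * gaussianPDFReal 0 1 2) ≤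
        ∫⁻ x in Set.Icc (1:ℝ) 2, gaussianReal 0 t (Set.Ico (-(w*x)) 0) ∂(gaussianReal 0 1) := by
      refine le_trans ?_ hlow
      rw [ENNReal.ofReal_mul (by positivity)]
      exact mul_le_mul_right hIcc _
    refine le_trans ?_ (add_le_add_right hlow2 (1/4 : ℝ≥0∞))
    rw [ENNReal.ofReal_add (by norm_num) (by positivity), ofReal_quarter]
    apply add_le_add_right
    apply ENNReal.ofReal_le_ofReal
    -- real inequality
    have hpdf2 : gaussianPDFReal 0 1 2 = (√(2*π))⁻¹ * rexp (-2) := by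
      simp only [gaussianPDFReal, sub_zero, NNReal.coe_one, mul_one]
      norm_num
    rw [hpdf2]
    have key : (√(2*π))⁻¹ * rexp (-(1/2)) * ((√(2*π))⁻¹ * rexp (-2))
        = (2*π)⁻¹ * rexp (-(5/2)) := by
      rw [show rexp (-(5/2)) = rexp (-(1/2)) * rexp (-2) by
        rw [← Real.exp_add]; norm_num]
      linear_combination (rexp (-(1/2)) * rexp (-2)) * h2π
    rw [key]
    exact numeric_large w hw0 hw1

open scoped BigOperators

/-- For a unitary `U` with `Re(U_{j,i}) ≥ 0` and a standard Gaussian vector `v`,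
`Pr(v_i ≥ 0 and Re((Uv)_j) ≥ 0) ≥ (1/4)·(1 + Re(U_{j,i})·(1 - |U_{j,i}|)²/8)`. -/
theorem correlated_sign_probability_lower_bound
    (N : ℕ) (hN : 1 ≤ N) (U : Matrix (Fin N) (Fin N) ℂ)
    (hU : U ∈ Matrix.unitaryGroup (Fin N) ℂ)
    (i j : Fin N) (hre : 0 ≤ (U j i).re) :
    ENNReal.ofReal ((1 / 4 : ℝ) * (1 + (U j i).re * (1 - ‖U j i‖) ^ 2 / 8)) ≤
      (Measure.pi fun _ : Fin N => gaussianReal 0 1)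
        {v : Fin N → ℝ | 0 ≤ v i ∧ 0 ≤ (U.mulVec (fun x => (v x : ℂ)) j).re} := by
  obtain ⟨n, rfl⟩ : ∃ n, N = n + 1 := ⟨N - 1, by omega⟩
  set w : Fin (n+1) → ℝ := fun x => (U j x).re with hwdef
  -- rewrite the event
  have hset : {v : Fin (n+1) → ℝ | 0 ≤ v i ∧ 0 ≤ (U.mulVec (fun x => (v x : ℂ)) j).re}
      = {v : Fin (n+1) → ℝ | 0 ≤ v i ∧ 0 ≤ ∑ x, w x * v x} := by
    ext v
    simp only [Set.mem_setOf_eq, Matrix.mulVec, dotProduct]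
    rw [Complex.re_sum]
    simp [Complex.mul_re, hwdef]
  rw [hset]
  -- row norm
  have hrow : ∑ x, Complex.normSq (U j x) = 1 := by
    have h2 : U * star U = 1 := hU.2
    have h3 : (U * star U) j j = (1 : Matrix (Fin (n+1)) (Fin (n+1)) ℂ) j j := by rw [h2]
    rw [Matrix.mul_apply, Matrix.one_apply_eq] at h3
    have h4 : ∀ x, U j x * (star U) x j = (Complex.normSq (U j x) : ℂ) := by
      intro x
      rw [Matrix.star_apply, RCLike.star_def, Complex.mul_conj]
    rw [Finset.sum_congr rfl (fun x _ => h4 x)] at h3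
    exact_mod_cast (by exact_mod_cast h3 : ((∑ x, Complex.normSq (U j x) : ℝ) : ℂ) = 1)
  have hwle : ∀ x, (w x)^2 ≤ Complex.normSq (U j x) := by
    intro x
    rw [Complex.normSq_apply, hwdef]
    nlinarith [sq_nonneg (U j x).im, sq_nonneg (U j x).re]
  have hnsq1 : Complex.normSq (U j i) ≤ 1 := by
    have : ∀ x, 0 ≤ Complex.normSq (U j x) := fun x => Complex.normSq_nonneg _
    calc Complex.normSq (U j i) ≤ ∑ x, Complex.normSq (U j x) :=
          Finset.single_le_sum (fun x _ => this x) (Finset.mem_univ i)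
      _ = 1 := hrow
  have hwi1 : w i ≤ 1 := by nlinarith [hwle i]
  have hr1 : ‖U j i‖ ≤ 1 := by
    have := Complex.sq_norm (U j i)
    have hn : ‖U j i‖^2 = Complex.normSq (U j i) := by
      rw [← this]
    nlinarith [norm_nonneg (U j i)]
  have hrw : w i ≤ ‖U j i‖ := by
    rw [hwdef]
    exact Complex.re_le_norm _
  -- variance of the rest
  set t : ℝ≥0 := ∑ k : Fin n, nnsq (w (i.succAbove k)) with htdef
  have htcoe : (t:ℝ) = ∑ k : Fin n, (w (i.succAbove k))^2 := by
    rw [htdef, NNReal.coe_sum]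
    simp [nnsq]
    rfl
  have hsplitsum : ∑ x, Complex.normSq (U j x)
      = Complex.normSq (U j i) + ∑ k : Fin n, Complex.normSq (U j (i.succAbove k)) :=
    Fin.sum_univ_succAbove _ i
  have ht1 : (t:ℝ) ≤ 1 - (w i)^2 := by
    have h5 : (t:ℝ) ≤ ∑ k : Fin n, Complex.normSq (U j (i.succAbove k)) := by
      rw [htcoe]
      exact Finset.sum_le_sum fun k _ => hwle _
    have h6 : ∑ k : Fin n, Complex.normSq (U j (i.succAbove k))
        = 1 - Complex.normSq (U j i) := by
      rw [← hrow, hsplitsum]; ring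
    have := hwle i
    linarith
  -- pushforward to 2D
  have hE''m : MeasurableSet {p : ℝ × ℝ | 0 ≤ p.1 ∧ 0 ≤ w i * p.1 + p.2} :=
    (measurableSet_le measurable_const measurable_fst).inter
      (measurableSet_le measurable_const ((measurable_fst.const_mul (w i)).add measurable_snd))
  have hmeasg : Measurable (fun u : Fin n → ℝ => ∑ k, w (i.succAbove k) * u k) :=
    Finset.measurable_sum _ fun k _ => (measurable_pi_apply k).const_mul _
  have hE'm : MeasurableSet {q : ℝ × (Fin n → ℝ) |
      0 ≤ q.1 ∧ 0 ≤ w i * q.1 + ∑ k, w (i.succAbove k) * q.2 k} :=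
    (measurableSet_le measurable_const measurable_fst).inter
      (measurableSet_le measurable_const
        ((measurable_fst.const_mul (w i)).add (hmeasg.comp measurable_snd)))
  have hmp := measurePreserving_piFinSuccAbove (fun _ : Fin (n+1) => gaussianReal 0 1) i
  set e := MeasurableEquiv.piFinSuccAbove (fun _ : Fin (n+1) => ℝ) i with hedef
  have hpre : {v : Fin (n+1) → ℝ | 0 ≤ v i ∧ 0 ≤ ∑ x, w x * v x}
      = e ⁻¹' {q : ℝ × (Fin n → ℝ) |
        0 ≤ q.1 ∧ 0 ≤ w i * q.1 + ∑ k, w (i.succAbove k) * q.2 k} := by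
    ext v
    simp only [Set.mem_setOf_eq, Set.mem_preimage, hedef,
      MeasurableEquiv.piFinSuccAbove_apply, Fin.insertNthEquiv, Equiv.coe_fn_symm_mk,
      Fin.removeNth]
    rw [Fin.sum_univ_succAbove (fun x => w x * v x) i]
  rw [hpre, hmp.measure_preimage hE'm.nullMeasurableSet]
  -- second coordinate map
  have hpre2 : {q : ℝ × (Fin n → ℝ) |
        0 ≤ q.1 ∧ 0 ≤ w i * q.1 + ∑ k, w (i.succAbove k) * q.2 k}
      = (Prod.map (id : ℝ → ℝ) (fun u : Fin n → ℝ => ∑ k, w (i.succAbove k) * u k)) ⁻¹'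
        {p : ℝ × ℝ | 0 ≤ p.1 ∧ 0 ≤ w i * p.1 + p.2} := rfl
  rw [hpre2, ← Measure.map_apply (measurable_id.prodMap hmeasg) hE''m,
    ← Measure.map_prod_map _ _ measurable_id hmeasg, Measure.map_id,
    gaussian_linear_comb n (fun k => w (i.succAbove k))]
  -- apply core2d
  refine le_trans ?_ (core2d (w i) hre hwi1 t ht1)
  apply ENNReal.ofReal_le_ofReal
  have hsq : (1 - ‖U j i‖)^2 ≤ (1 - w i)^2 := by
    have h1 : 0 ≤ 1 - ‖U j i‖ := by linarith
    have h2 : 1 - ‖U j i‖ ≤ 1 - w i := by linarith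
    exact pow_le_pow_left₀ h1 h2 2
  have : (U j i).re * (1 - ‖U j i‖)^2 ≤ w i * (1 - w i)^2 :=
    mul_le_mul_of_nonneg_left hsq hre
  nlinarith [this]
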